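/- Let X and Y be locally compact Hausdorff spaces and let T : C₀(X)⁺ → C₀(Y)⁺ be a bijection such that for all f, g ∈ C₀(X)⁺ one has ‖T(f+g)‖ = ‖T(f)+T(g)‖ and ‖T(f·g)‖ = ‖T(f)·T(g)‖. Then T is norm-preserving on the positive cone: ‖T(h)‖ = ‖h‖ for every h ∈ C₀(X)⁺. -/

import Mathlib

open scoped ZeroAtInfty
open Filter ZeroAtInftyContinuousMap

namespace NormPreserveAux

variable {Z : Type*} [TopologicalSpace Z]

lemma apply_le_norm (f : C₀(Z, ℝ)) (x : Z) : f x ≤ ‖f‖ := by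
  have h := BoundedContinuousFunction.norm_coe_le_norm f.toBCF x
  rw [norm_toBCF_eq_norm] at h
  exact (abs_le.mp (by simpa [Real.norm_eq_abs] using h)).2

lemma norm_le_of_forall {f : C₀(Z, ℝ)} {C : ℝ} (hC : 0 ≤ C) (h : ∀ x, |f x| ≤ C) : ‖f‖ ≤ C := by
  rw [← norm_toBCF_eq_norm]
  exact (BoundedContinuousFunction.norm_le hC).mpr (by simpa [Real.norm_eq_abs] using h)

lemma norm_mono {f g : C₀(Z, ℝ)} (hf : ∀ x, 0 ≤ f x) (hle : ∀ x, f x ≤ g x) : ‖f‖ ≤ ‖g‖ := by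
  refine norm_le_of_forall (norm_nonneg g) fun x => ?_
  rw [abs_of_nonneg (hf x)]
  exact (hle x).trans (apply_le_norm g x)

lemma norm_sq (f : C₀(Z, ℝ)) : ‖f * f‖ = ‖f‖ * ‖f‖ := by
  have hs : star f = f := ZeroAtInftyContinuousMap.ext fun x => star_trivial _
  conv_lhs => rw [← hs]
  exact CStarRing.norm_star_mul_self

lemma two_nn : (0:ℝ) ≤ 2 := by norm_num

lemma seven_nn : (0:ℝ) ≤ 7 := by norm_num

/-- An explicit cutoff function: `min 1 (max 0 (c * F x - d))`. -/
noncomputable def cutoff (c d : ℝ) (hd : 0 ≤ d) (F : C₀(Z, ℝ)) : C₀(Z, ℝ) where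
  toFun := fun x => min 1 (max 0 (c * F x - d))
  continuous_toFun := by
    refine continuous_const.min (continuous_const.max ?_)
    exact (continuous_const.mul (map_continuous F)).sub continuous_const
  zero_at_infty' := by
    have hcont : Continuous fun t : ℝ => min 1 (max 0 (c * t - d)) := by
      refine continuous_const.min (continuous_const.max ?_)
      exact (continuous_const.mul continuous_id).sub continuous_const
    have h0 : min 1 (max 0 (c * (0:ℝ) - d)) = 0 := by
      rw [mul_zero, zero_sub, max_eq_left (neg_nonpos.mpr hd), min_eq_right (by norm_num)]
    have h := (hcont.tendsto 0).comp (zero_at_infty F)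
    rw [h0] at h
    exact h

@[simp] lemma cutoff_apply (c d : ℝ) (hd : 0 ≤ d) (F : C₀(Z, ℝ)) (x : Z) :
    cutoff c d hd F x = min 1 (max 0 (c * F x - d)) := rfl

lemma cutoff_nonneg (c d : ℝ) (hd : 0 ≤ d) (F : C₀(Z, ℝ)) (x : Z) :
    0 ≤ cutoff c d hd F x := le_min one_pos.le (le_max_left _ _)

lemma cutoff_le_one (c d : ℝ) (hd : 0 ≤ d) (F : C₀(Z, ℝ)) (x : Z) :
    cutoff c d hd F x ≤ 1 := min_le_left _ _

lemma cutoff_eq_zero {c d : ℝ} (hd : 0 ≤ d) {F : C₀(Z, ℝ)} {x : Z}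
    (h : c * F x ≤ d) : cutoff c d hd F x = 0 := by
  rw [cutoff_apply, max_eq_left (by linarith), min_eq_right (by norm_num)]

lemma cutoff_eq_one {c d : ℝ} (hd : 0 ≤ d) {F : C₀(Z, ℝ)} {x : Z}
    (h : 1 ≤ c * F x - d) : cutoff c d hd F x = 1 := by
  rw [cutoff_apply, max_eq_right (by linarith), min_eq_left h]

lemma aux_pow_le {a b : ℝ} (ha : 0 ≤ a) (hb : 0 ≤ b)
    (h : ∀ k : ℕ, a ^ (2 ^ k) ≤ 2 * b ^ (2 ^ k)) : a ≤ b := by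
  by_contra hab
  push_neg at hab
  rcases eq_or_lt_of_le hb with hb0 | hb0
  · have h0 := h 0
    rw [← hb0] at h0
    norm_num at h0
    linarith
  · have hq : 1 < a / b := (one_lt_div hb0).mpr hab
    obtain ⟨n, hn⟩ := pow_unbounded_of_one_lt (2:ℝ) hq
    have hmono : (a / b) ^ n ≤ (a / b) ^ (2 ^ n) :=
      pow_le_pow_right₀ hq.le (Nat.lt_two_pow_self (n := n)).le
    have hk := h n
    have hbpow : (0:ℝ) < b ^ (2 ^ n) := pow_pos hb0 _
    have hle2 : (a / b) ^ (2 ^ n) ≤ 2 := by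
      rw [div_pow, div_le_iff₀ hbpow]
      linarith
    linarith

end NormPreserveAux

open NormPreserveAux

set_option maxHeartbeats 1000000 in
/-- A ring isomorphism in norm between positive cones is norm-preserving on the cone. -/
theorem norm_preserving_on_cone {X Y : Type*}
    [TopologicalSpace X] [LocallyCompactSpace X] [T2Space X]
    [TopologicalSpace Y] [LocallyCompactSpace Y] [T2Space Y]
    (T : C₀(X, ℝ) → C₀(Y, ℝ))
    (hbij : Set.BijOn T {f : C₀(X, ℝ) | ∀ x, 0 ≤ f x} {g : C₀(Y, ℝ) | ∀ y, 0 ≤ g y})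
    (hadd : ∀ f g : C₀(X, ℝ), (∀ x, 0 ≤ f x) → (∀ x, 0 ≤ g x) →
      ‖T (f + g)‖ = ‖T f + T g‖)
    (hmul : ∀ f g : C₀(X, ℝ), (∀ x, 0 ≤ f x) → (∀ x, 0 ≤ g x) →
      ‖T (f * g)‖ = ‖T f * T g‖) :
    ∀ h : C₀(X, ℝ), (∀ x, 0 ≤ h x) → ‖T h‖ = ‖h‖ := by
  have h0cone : ∀ x, 0 ≤ (0 : C₀(X, ℝ)) x := fun x => le_refl 0
  -- T 0 = 0
  have hT0 : T 0 = 0 := by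
    have h := hadd 0 0 h0cone h0cone
    rw [add_zero] at h
    have h2 : ‖T 0 + T 0‖ = 2 * ‖T 0‖ := by
      rw [← two_smul ℝ (T 0), norm_smul, Real.norm_two]
    rw [h2] at h
    have h3 : ‖T 0‖ = 0 := by linarith
    exact norm_eq_zero.mp h3
  -- monotonicity of ‖T ·‖ on the cone
  have hmono : ∀ f g : C₀(X, ℝ), (∀ x, 0 ≤ f x) → (∀ x, 0 ≤ g x) →
      (∀ x, f x ≤ g x) → ‖T f‖ ≤ ‖T g‖ := by
    intro f g hf hg hle
    have hgf : ∀ x, 0 ≤ (g - f) x := fun x => by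
      rw [ZeroAtInftyContinuousMap.coe_sub]
      exact sub_nonneg.mpr (hle x)
    have hgeq : g = f + (g - f) := by abel
    rw [hgeq, hadd f (g - f) hf hgf]
    have h1 : ∀ y, 0 ≤ (T f) y := hbij.mapsTo hf
    have h2 : ∀ y, 0 ≤ (T (g - f)) y := hbij.mapsTo hgf
    refine norm_mono h1 fun y => ?_
    rw [ZeroAtInftyContinuousMap.add_apply]
    linarith [h2 y]
  -- doubling
  have hdouble : ∀ f : C₀(X, ℝ), (∀ x, 0 ≤ f x) → ‖T ((2:ℝ) • f)‖ = 2 * ‖T f‖ := by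
    intro f hf
    rw [two_smul ℝ f, hadd f f hf hf, ← two_smul ℝ (T f), norm_smul, Real.norm_two]
  -- nat dyadic scaling
  have hscale : ∀ (m : ℕ) (f : C₀(X, ℝ)), (∀ x, 0 ≤ f x) →
      ‖T (((2:ℝ) ^ m) • f)‖ = 2 ^ m * ‖T f‖ := by
    intro m
    induction m with
    | zero => intro f hf; simp
    | succ m ih =>
      intro f hf
      have hrw : ((2:ℝ) ^ (m + 1)) • f = ((2:ℝ) ^ m) • ((2:ℝ) • f) := by
        rw [smul_smul, pow_succ]
      have h2f : ∀ x, 0 ≤ ((2:ℝ) • f) x := fun x => by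
        rw [ZeroAtInftyContinuousMap.smul_apply, smul_eq_mul]
        exact mul_nonneg two_nn (hf x)
      rw [hrw, ih ((2:ℝ) • f) h2f, hdouble f hf]
      ring
  -- integer dyadic scaling
  have hzscale : ∀ (z : ℤ) (f : C₀(X, ℝ)), (∀ x, 0 ≤ f x) →
      ‖T (((2:ℝ) ^ z) • f)‖ = (2:ℝ) ^ z * ‖T f‖ := by
    intro z f hf
    rcases le_or_gt 0 z with hz | hz
    · lift z to ℕ using hz
      rw [zpow_natCast]
      exact hscale z f hf
    · set n : ℕ := (-z).toNat with hn
      have hzn : z = -(n : ℤ) := by rw [hn]; omega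
      have hgpos : ∀ x, 0 ≤ (((2:ℝ) ^ z) • f) x := fun x => by
        rw [ZeroAtInftyContinuousMap.smul_apply, smul_eq_mul]
        exact mul_nonneg (zpow_pos (by norm_num) z).le (hf x)
      have key := hscale n (((2:ℝ) ^ z) • f) hgpos
      have hone : (2:ℝ) ^ (n:ℕ) * (2:ℝ) ^ z = 1 := by
        rw [← zpow_natCast (2:ℝ) n, ← zpow_add₀ (by norm_num : (2:ℝ) ≠ 0), hzn]
        simp
      have hrw : ((2:ℝ) ^ (n:ℕ)) • (((2:ℝ) ^ z) • f) = f := by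
        rw [smul_smul, hone, one_smul]
      rw [hrw] at key
      have hone' : (2:ℝ) ^ z * (2:ℝ) ^ (n:ℕ) = 1 := by rw [mul_comm]; exact hone
      rw [key, ← mul_assoc, hone', one_mul]
  -- squaring
  have hsq : ∀ f : C₀(X, ℝ), (∀ x, 0 ≤ f x) → ‖T (f * f)‖ = ‖T f‖ * ‖T f‖ := by
    intro f hf
    rw [hmul f f hf hf, norm_sq (T f)]
  -- iterated squaring
  have hpow : ∀ (k : ℕ) (f : C₀(X, ℝ)), (∀ x, 0 ≤ f x) →
      (∀ x, 0 ≤ ((fun g : C₀(X, ℝ) => g * g)^[k] f) x) ∧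
      ‖T ((fun g : C₀(X, ℝ) => g * g)^[k] f)‖ = ‖T f‖ ^ (2 ^ k) ∧
      ‖(fun g : C₀(X, ℝ) => g * g)^[k] f‖ = ‖f‖ ^ (2 ^ k) := by
    intro k
    induction k with
    | zero =>
      intro f hf
      refine ⟨by simpa using hf, by simp, by simp⟩
    | succ k ih =>
      intro f hf
      obtain ⟨hP, hT, hN⟩ := ih f hf
      have hit : (fun g : C₀(X, ℝ) => g * g)^[k+1] f
          = ((fun g : C₀(X, ℝ) => g * g)^[k] f) * ((fun g : C₀(X, ℝ) => g * g)^[k] f) :=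
        Function.iterate_succ_apply' _ _ _
      have hexp : (2:ℕ) ^ k + 2 ^ k = 2 ^ (k + 1) := by rw [pow_succ]; ring
      refine ⟨?_, ?_, ?_⟩
      · intro x
        rw [hit, ZeroAtInftyContinuousMap.mul_apply]
        exact mul_nonneg (hP x) (hP x)
      · rw [hit, hsq _ hP, hT, ← pow_add, hexp]
      · rw [hit, norm_sq _, hN, ← pow_add, hexp]
  -- Step A: ‖f‖ ≤ 1 implies ‖T f‖ ≤ 1
  have hA : ∀ f : C₀(X, ℝ), (∀ x, 0 ≤ f x) → ‖f‖ ≤ 1 → ‖T f‖ ≤ 1 := by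
    intro f hf h1
    have hff : ∀ x, 0 ≤ (f * f) x := fun x => by
      rw [ZeroAtInftyContinuousMap.mul_apply]
      exact mul_nonneg (hf x) (hf x)
    have hle : ∀ x, (f * f) x ≤ f x := fun x => by
      rw [ZeroAtInftyContinuousMap.mul_apply]
      nlinarith [hf x, (apply_le_norm f x).trans h1]
    have h := hmono (f * f) f hff hf hle
    rw [hsq f hf] at h
    nlinarith [norm_nonneg (T f)]
  -- Step B: ‖T f‖ ≤ 2 ‖f‖
  have hB : ∀ f : C₀(X, ℝ), (∀ x, 0 ≤ f x) → ‖T f‖ ≤ 2 * ‖f‖ := by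
    intro f hf
    rcases eq_or_ne f 0 with rfl | hne
    · simp [hT0]
    · have hr : 0 < ‖f‖ := norm_pos_iff.mpr hne
      obtain ⟨z, hz⟩ := exists_mem_Ioc_zpow (inv_pos.mpr hr) (by norm_num : (1:ℝ) < 2)
      rw [Set.mem_Ioc] at hz
      obtain ⟨hz1, hz2⟩ := hz
      have hzpos : (0:ℝ) < (2:ℝ) ^ z := zpow_pos (by norm_num) z
      have hvpos : ∀ x, 0 ≤ (((2:ℝ) ^ z) • f) x := fun x => by
        rw [ZeroAtInftyContinuousMap.smul_apply, smul_eq_mul]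
        exact mul_nonneg hzpos.le (hf x)
      have hvnorm : ‖((2:ℝ) ^ z) • f‖ = (2:ℝ) ^ z * ‖f‖ := by
        have h := norm_smul ((2:ℝ) ^ z) f
        rw [Real.norm_eq_abs, abs_of_pos hzpos] at h
        exact h
      have hvle : ‖((2:ℝ) ^ z) • f‖ ≤ 1 := by
        rw [hvnorm]
        calc (2:ℝ) ^ z * ‖f‖ ≤ ‖f‖⁻¹ * ‖f‖ :=
              mul_le_mul_of_nonneg_right hz1.le hr.le
          _ = 1 := inv_mul_cancel₀ hr.ne'
      have hTv : ‖T (((2:ℝ) ^ z) • f)‖ ≤ 1 := hA _ hvpos hvle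
      have hTveq : ‖T (((2:ℝ) ^ z) • f)‖ = (2:ℝ) ^ z * ‖T f‖ := hzscale z f hf
      have h1 : (2:ℝ) ^ z * ‖T f‖ ≤ 1 := by rw [← hTveq]; exact hTv
      have h2z1 : (2:ℝ) ^ (z + 1) = 2 * (2:ℝ) ^ z := by
        rw [zpow_add₀ (by norm_num : (2:ℝ) ≠ 0)]
        ring
      have e1 : (1:ℝ) ≤ 2 * (2:ℝ) ^ z * ‖f‖ := by
        have e2 := mul_le_mul_of_nonneg_right hz2 hr.le
        rw [inv_mul_cancel₀ hr.ne', h2z1] at e2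
        linarith
      nlinarith [h1, e1, hzpos, norm_nonneg (T f)]
  -- Upper bound: ‖T f‖ ≤ ‖f‖
  have hUB : ∀ f : C₀(X, ℝ), (∀ x, 0 ≤ f x) → ‖T f‖ ≤ ‖f‖ := by
    intro f hf
    refine aux_pow_le (norm_nonneg _) (norm_nonneg _) fun k => ?_
    obtain ⟨hP, hT, hN⟩ := hpow k f hf
    calc ‖T f‖ ^ (2 ^ k) = ‖T ((fun g : C₀(X, ℝ) => g * g)^[k] f)‖ := hT.symm
      _ ≤ 2 * ‖(fun g : C₀(X, ℝ) => g * g)^[k] f‖ := hB _ hP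
      _ = 2 * ‖f‖ ^ (2 ^ k) := by rw [hN]
  -- Lower bound: ‖f‖ ≤ ‖T f‖
  have hLB : ∀ f : C₀(X, ℝ), (∀ x, 0 ≤ f x) → ‖f‖ ≤ ‖T f‖ := by
    intro f hf
    by_contra hcon
    push_neg at hcon
    have hr : 0 < ‖f‖ := lt_of_le_of_lt (norm_nonneg _) hcon
    have hs : 0 < ‖T f‖ := by
      rcases eq_or_lt_of_le (norm_nonneg (T f)) with h0 | h0
      · exfalso
        have hTf0 : T f = 0 := norm_eq_zero.mp h0.symm
        have hf0 : f = 0 := hbij.injOn hf h0cone (by rw [hTf0, hT0])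
        rw [hf0] at hr
        simp at hr
      · exact h0
    have hq1 : ‖T f‖ / ‖f‖ < 1 := (div_lt_one hr).mpr hcon
    have hq0 : 0 < ‖T f‖ / ‖f‖ := div_pos hs hr
    obtain ⟨n, hn⟩ := exists_pow_lt_of_lt_one (by norm_num : (0:ℝ) < 1/8) hq1
    obtain ⟨hP, hT, hN⟩ := hpow n f hf
    set F := (fun g : C₀(X, ℝ) => g * g)^[n] f with hF
    have hRpos : 0 < ‖F‖ := by rw [hN]; exact pow_pos hr _
    have hR0 : ‖F‖ ≠ 0 := hRpos.ne'
    -- ‖T F‖ < ‖F‖ / 8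
    have hSR : ‖T F‖ < ‖F‖ / 8 := by
      have hmono2 : (‖T f‖ / ‖f‖) ^ (2 ^ n) ≤ (‖T f‖ / ‖f‖) ^ n :=
        pow_le_pow_of_le_one hq0.le hq1.le (Nat.lt_two_pow_self (n := n)).le
      have hlt : (‖T f‖ / ‖f‖) ^ (2 ^ n) < 1/8 := lt_of_le_of_lt hmono2 hn
      rw [div_pow, div_lt_iff₀ (pow_pos hr _)] at hlt
      rw [hT, hN]
      linarith
    -- pick x₀ with F x₀ > 7/8 * ‖F‖
    have hx0 : ∃ x, 7 / 8 * ‖F‖ < F x := by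
      by_contra hno
      push_neg at hno
      have hle7 : ‖F‖ ≤ 7 / 8 * ‖F‖ :=
        norm_le_of_forall (by linarith) fun x => by
          rw [abs_of_nonneg (hP x)]; exact hno x
      linarith
    obtain ⟨x₀, hx₀⟩ := hx0
    -- cutoff functions u and h
    have hucone : ∀ x, 0 ≤ cutoff (4 / ‖F‖) 2 two_nn F x := cutoff_nonneg _ _ _ F
    have hhcone : ∀ x, 0 ≤ cutoff (8 / ‖F‖) 7 seven_nn F x := cutoff_nonneg _ _ _ F
    -- h * u = h
    have hhu : cutoff (8 / ‖F‖) 7 seven_nn F * cutoff (4 / ‖F‖) 2 two_nn F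
        = cutoff (8 / ‖F‖) 7 seven_nn F := by
      apply ZeroAtInftyContinuousMap.ext
      intro x
      rw [ZeroAtInftyContinuousMap.mul_apply]
      rcases le_or_gt (F x) (7 / 8 * ‖F‖) with hle | hlt
      · have hz : cutoff (8 / ‖F‖) 7 seven_nn F x = 0 := by
          refine cutoff_eq_zero _ ?_
          have e1 : 8 / ‖F‖ * F x ≤ 8 / ‖F‖ * (7 / 8 * ‖F‖) :=
            mul_le_mul_of_nonneg_left hle (by positivity)
          have e2 : 8 / ‖F‖ * (7 / 8 * ‖F‖) = 7 := by field_simp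
          linarith
        rw [hz, zero_mul]
      · have ho : cutoff (4 / ‖F‖) 2 two_nn F x = 1 := by
          refine cutoff_eq_one _ ?_
          have e1 : 4 / ‖F‖ * (7 / 8 * ‖F‖) < 4 / ‖F‖ * F x :=
            mul_lt_mul_of_pos_left hlt (by positivity)
          have e2 : 4 / ‖F‖ * (7 / 8 * ‖F‖) = 7 / 2 := by field_simp; ring
          linarith
        rw [ho, mul_one]
    -- h x₀ > 0
    have hhx0 : 0 < cutoff (8 / ‖F‖) 7 seven_nn F x₀ := by
      rw [cutoff_apply]
      have h8 : 0 < 8 / ‖F‖ * F x₀ - 7 := by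
        have e1 : 8 / ‖F‖ * (7 / 8 * ‖F‖) < 8 / ‖F‖ * F x₀ :=
          mul_lt_mul_of_pos_left hx₀ (by positivity)
        have e2 : 8 / ‖F‖ * (7 / 8 * ‖F‖) = 7 := by field_simp
        linarith
      rw [max_eq_right h8.le]
      exact lt_min one_pos h8
    -- find dyadic 2^w with ‖T F‖ ≤ 2^w / 2 and 2^w < ‖F‖ / 2
    have hSpos : 0 < ‖T F‖ := by
      rw [hT]
      exact pow_pos hs _
    obtain ⟨z, hz⟩ := exists_mem_Ioc_zpow hSpos (by norm_num : (1:ℝ) < 2)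
    rw [Set.mem_Ioc] at hz
    have h2z : (2:ℝ) ^ (z + 2) = 4 * (2:ℝ) ^ z := by
      rw [zpow_add₀ (by norm_num : (2:ℝ) ≠ 0)]
      norm_num
      ring
    have h2z1 : (2:ℝ) ^ (z + 1) = 2 * (2:ℝ) ^ z := by
      rw [zpow_add₀ (by norm_num : (2:ℝ) ≠ 0)]
      ring
    have hwlt : (2:ℝ) ^ (z + 2) < ‖F‖ / 2 := by
      rw [h2z]
      have := hz.1
      linarith
    have hwS : ‖T F‖ ≤ (2:ℝ) ^ (z + 2) / 2 := by
      rw [h2z]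
      have := hz.2
      rw [h2z1] at this
      linarith
    have hwpos : (0:ℝ) < (2:ℝ) ^ (z + 2) := zpow_pos (by norm_num) _
    -- (2^(z+2)) • u ≤ F pointwise
    have huleF : ∀ x, (((2:ℝ) ^ (z + 2)) • cutoff (4 / ‖F‖) 2 two_nn F) x ≤ F x := by
      intro x
      rw [ZeroAtInftyContinuousMap.smul_apply, smul_eq_mul]
      rcases le_or_gt (F x) (‖F‖ / 2) with hle | hlt
      · have hz0 : cutoff (4 / ‖F‖) 2 two_nn F x = 0 := by
          refine cutoff_eq_zero _ ?_
          have e1 : 4 / ‖F‖ * F x ≤ 4 / ‖F‖ * (‖F‖ / 2) :=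
            mul_le_mul_of_nonneg_left hle (by positivity)
          have e2 : 4 / ‖F‖ * (‖F‖ / 2) = 2 := by field_simp; ring
          linarith
        rw [hz0, mul_zero]
        exact hP x
      · have hu1 : cutoff (4 / ‖F‖) 2 two_nn F x ≤ 1 := cutoff_le_one _ _ _ F x
        have e3 : (2:ℝ) ^ (z + 2) * cutoff (4 / ‖F‖) 2 two_nn F x ≤ (2:ℝ) ^ (z + 2) := by
          nlinarith [hucone x]
        linarith
    have hwu : ∀ x, 0 ≤ (((2:ℝ) ^ (z + 2)) • cutoff (4 / ‖F‖) 2 two_nn F) x := fun x => by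
      rw [ZeroAtInftyContinuousMap.smul_apply, smul_eq_mul]
      exact mul_nonneg hwpos.le (hucone x)
    -- ‖T u‖ ≤ 1/2
    have hTu : ‖T (cutoff (4 / ‖F‖) 2 two_nn F)‖ ≤ 1 / 2 := by
      have h1 := hmono _ F hwu hP huleF
      rw [hzscale (z + 2) _ hucone] at h1
      have h2 := le_trans h1 hwS
      have h3 : (2:ℝ) ^ (z + 2) * ‖T (cutoff (4 / ‖F‖) 2 two_nn F)‖
          ≤ (2:ℝ) ^ (z + 2) * (1 / 2) := by
        have h4 : (2:ℝ) ^ (z + 2) / 2 = (2:ℝ) ^ (z + 2) * (1 / 2) := by ring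
        rw [h4] at h2
        exact h2
      exact (mul_le_mul_iff_right₀ hwpos).mp h3
    -- ‖T h‖ = 0 hence h = 0, contradiction
    have hTh : ‖T (cutoff (8 / ‖F‖) 7 seven_nn F)‖ = 0 := by
      have heq : ‖T (cutoff (8 / ‖F‖) 7 seven_nn F)‖
          = ‖T (cutoff (8 / ‖F‖) 7 seven_nn F) * T (cutoff (4 / ‖F‖) 2 two_nn F)‖ := by
        rw [← hmul _ _ hhcone hucone, hhu]
      have hle2 := norm_mul_le (T (cutoff (8 / ‖F‖) 7 seven_nn F))
        (T (cutoff (4 / ‖F‖) 2 two_nn F))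
      have hfin : ‖T (cutoff (8 / ‖F‖) 7 seven_nn F)‖
          ≤ ‖T (cutoff (8 / ‖F‖) 7 seven_nn F)‖ * (1 / 2) := by
        calc ‖T (cutoff (8 / ‖F‖) 7 seven_nn F)‖
            = ‖T (cutoff (8 / ‖F‖) 7 seven_nn F) * T (cutoff (4 / ‖F‖) 2 two_nn F)‖ := heq
          _ ≤ ‖T (cutoff (8 / ‖F‖) 7 seven_nn F)‖ * ‖T (cutoff (4 / ‖F‖) 2 two_nn F)‖ := hle2
          _ ≤ ‖T (cutoff (8 / ‖F‖) 7 seven_nn F)‖ * (1 / 2) :=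
              mul_le_mul_of_nonneg_left hTu (norm_nonneg _)
      nlinarith [norm_nonneg (T (cutoff (8 / ‖F‖) 7 seven_nn F))]
    have hh0 : cutoff (8 / ‖F‖) 7 seven_nn F = 0 := by
      apply hbij.injOn hhcone h0cone
      rw [norm_eq_zero.mp hTh, hT0]
    rw [hh0] at hhx0
    simp at hhx0
  intro h hcone
  exact le_antisymm (hUB h hcone) (hLB h hcone)
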